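/- Let w_i⁰(x) = P(J_i(x) = s_i⁰(x)) be the probability of attaining the minimum attainable cost. Then for x ∉ Q, w_i⁰(x) = Σ_{j ∈ I(x)} p_{ij} w_j⁰(F_i(x)), where I(x) = argmin_{j : p_{ij} > 0} s_j⁰(F_i(x)); and w_i⁰(x) = 1 for x ∈ Q. -/
import Mathlib


open Classical in
/-- Probability that the random route-switching process, started at node `x`
using route `i` for the first step, terminates in `Q` within `n` steps with
total cumulative cost (running plus terminal) at most `s`. -/
noncomputable def reachCDF {X : Type*} {M : ℕ} (Q : Set X)
    (F : Fin M → X → X) (K : Fin M → X → ℝ) (q : Fin M → X → ℝ)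
    (p : Fin M → Fin M → ℝ) : ℕ → Fin M → X → ℝ → ℝ
  | 0, i, x, s => if x ∈ Q ∧ q i x ≤ s then 1 else 0
  | n + 1, i, x, s =>
      if x ∈ Q then (if q i x ≤ s then 1 else 0)
      else ∑ j, p i j * reachCDF Q F K q p n j (F i x) (s - K i x)

/-- The CDF `w_i(x,s) = P(J_i(x) ≤ s)` of the random cumulative cost, as the
monotone limit of the finite-horizon probabilities. -/
noncomputable def costCDF {X : Type*} {M : ℕ} (Q : Set X)
    (F : Fin M → X → X) (K : Fin M → X → ℝ) (q : Fin M → X → ℝ)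
    (p : Fin M → Fin M → ℝ) (i : Fin M) (x : X) (s : ℝ) : ℝ :=
  ⨆ n : ℕ, reachCDF Q F K q p n i x s

/-- The minimum attainable cost `s_i⁰(x) = inf { s : P(J_i(x) ≤ s) > 0 }`. -/
noncomputable def minCost {X : Type*} {M : ℕ} (Q : Set X)
    (F : Fin M → X → X) (K : Fin M → X → ℝ) (q : Fin M → X → ℝ)
    (p : Fin M → Fin M → ℝ) (i : Fin M) (x : X) : ℝ :=
  sInf {s : ℝ | 0 < costCDF Q F K q p i x s}

section AuxLemmas

open Classical Filter

variable {X : Type*} {M : ℕ} (Q : Set X) (F : Fin M → X → X) (K : Fin M → X → ℝ)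
  (q : Fin M → X → ℝ) (p : Fin M → Fin M → ℝ)

lemma reach_nonneg (hp0 : ∀ i j, 0 ≤ p i j) :
    ∀ n (i : Fin M) (x : X) (s : ℝ), 0 ≤ reachCDF Q F K q p n i x s := by
  intro n
  induction n with
  | zero => intro i x s; simp only [reachCDF]; split <;> norm_num
  | succ n ih =>
    intro i x s; simp only [reachCDF]
    split
    · split <;> norm_num
    · exact Finset.sum_nonneg fun j _ => mul_nonneg (hp0 i j) (ih j _ _)

lemma reach_le_one (hp0 : ∀ i j, 0 ≤ p i j) (hp1 : ∀ i, ∑ j, p i j = 1) :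
    ∀ n (i : Fin M) (x : X) (s : ℝ), reachCDF Q F K q p n i x s ≤ 1 := by
  intro n
  induction n with
  | zero => intro i x s; simp only [reachCDF]; split <;> norm_num
  | succ n ih =>
    intro i x s; simp only [reachCDF]
    split
    · split <;> norm_num
    · calc ∑ j, p i j * reachCDF Q F K q p n j (F i x) (s - K i x)
          ≤ ∑ j, p i j * 1 :=
            Finset.sum_le_sum fun j _ =>
              mul_le_mul_of_nonneg_left (ih j _ _) (hp0 i j)
        _ = 1 := by simp [hp1 i]

lemma reach_mono_n (hp0 : ∀ i j, 0 ≤ p i j) :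
    ∀ n (i : Fin M) (x : X) (s : ℝ),
      reachCDF Q F K q p n i x s ≤ reachCDF Q F K q p (n + 1) i x s := by
  intro n
  induction n with
  | zero =>
    intro i x s
    by_cases hx : x ∈ Q
    · simp [reachCDF, hx]
    · have h0 : reachCDF Q F K q p 0 i x s = 0 := by
        simp only [reachCDF]; exact if_neg fun h => hx h.1
      rw [h0]
      exact reach_nonneg Q F K q p hp0 1 i x s
  | succ n ih =>
    intro i x s
    simp only [reachCDF]
    split
    · exact le_rfl
    · exact Finset.sum_le_sum fun j _ =>
        mul_le_mul_of_nonneg_left (ih j _ _) (hp0 i j)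

lemma reach_monotone (hp0 : ∀ i j, 0 ≤ p i j) (i : Fin M) (x : X) (s : ℝ) :
    Monotone fun n => reachCDF Q F K q p n i x s :=
  monotone_nat_of_le_succ fun n => reach_mono_n Q F K q p hp0 n i x s

lemma reach_bddAbove (hp0 : ∀ i j, 0 ≤ p i j) (hp1 : ∀ i, ∑ j, p i j = 1)
    (i : Fin M) (x : X) (s : ℝ) :
    BddAbove (Set.range fun n => reachCDF Q F K q p n i x s) := by
  refine ⟨1, ?_⟩
  rintro _ ⟨n, rfl⟩
  exact reach_le_one Q F K q p hp0 hp1 n i x s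

lemma cost_tendsto (hp0 : ∀ i j, 0 ≤ p i j) (hp1 : ∀ i, ∑ j, p i j = 1)
    (i : Fin M) (x : X) (s : ℝ) :
    Tendsto (fun n => reachCDF Q F K q p n i x s) atTop
      (nhds (costCDF Q F K q p i x s)) :=
  tendsto_atTop_ciSup (reach_monotone Q F K q p hp0 i x s)
    (reach_bddAbove Q F K q p hp0 hp1 i x s)

lemma reach_le_cost (hp0 : ∀ i j, 0 ≤ p i j) (hp1 : ∀ i, ∑ j, p i j = 1)
    (n : ℕ) (i : Fin M) (x : X) (s : ℝ) :
    reachCDF Q F K q p n i x s ≤ costCDF Q F K q p i x s :=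
  le_ciSup (reach_bddAbove Q F K q p hp0 hp1 i x s) n

lemma cost_nonneg (hp0 : ∀ i j, 0 ≤ p i j) (hp1 : ∀ i, ∑ j, p i j = 1)
    (i : Fin M) (x : X) (s : ℝ) : 0 ≤ costCDF Q F K q p i x s :=
  le_trans (reach_nonneg Q F K q p hp0 0 i x s)
    (reach_le_cost Q F K q p hp0 hp1 0 i x s)

lemma reach_neg (hK : ∀ i x, 0 < K i x) (hq : ∀ i, ∀ x ∈ Q, 0 ≤ q i x) :
    ∀ n (i : Fin M) (x : X) (s : ℝ), s < 0 → reachCDF Q F K q p n i x s = 0 := by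
  intro n
  induction n with
  | zero =>
    intro i x s hs
    simp only [reachCDF]
    rw [if_neg]
    rintro ⟨hx, hle⟩
    exact absurd hle (by have := hq i x hx; linarith)
  | succ n ih =>
    intro i x s hs
    simp only [reachCDF]
    by_cases hx : x ∈ Q
    · rw [if_pos hx, if_neg]
      have := hq i x hx; linarith
    · rw [if_neg hx]
      refine Finset.sum_eq_zero fun j _ => ?_
      rw [ih j (F i x) (s - K i x) (by have := hK i x; linarith), mul_zero]

lemma cost_neg (hK : ∀ i x, 0 < K i x) (hq : ∀ i, ∀ x ∈ Q, 0 ≤ q i x)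
    (i : Fin M) (x : X) (s : ℝ) (hs : s < 0) : costCDF Q F K q p i x s = 0 := by
  have : (fun n => reachCDF Q F K q p n i x s) = fun _ => (0 : ℝ) :=
    funext fun n => reach_neg Q F K q p hK hq n i x s hs
  rw [costCDF, this, ciSup_const]

lemma cost_inQ (i : Fin M) (x : X) (hx : x ∈ Q) (s : ℝ) :
    costCDF Q F K q p i x s = if q i x ≤ s then 1 else 0 := by
  have : (fun n => reachCDF Q F K q p n i x s)
      = fun _ => if q i x ≤ s then (1 : ℝ) else 0 := by
    funext n
    cases n with
    | zero => simp only [reachCDF]; by_cases h : q i x ≤ s <;> simp [hx, h]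
    | succ n => simp only [reachCDF]; rw [if_pos hx]
  rw [costCDF, this, ciSup_const]

lemma cost_rec (hp0 : ∀ i j, 0 ≤ p i j) (hp1 : ∀ i, ∑ j, p i j = 1)
    (i : Fin M) (x : X) (hx : x ∉ Q) (s : ℝ) :
    costCDF Q F K q p i x s
      = ∑ j, p i j * costCDF Q F K q p j (F i x) (s - K i x) := by
  have h1 : Tendsto (fun n => reachCDF Q F K q p (n + 1) i x s) atTop
      (nhds (costCDF Q F K q p i x s)) :=
    (cost_tendsto Q F K q p hp0 hp1 i x s).comp (tendsto_add_atTop_nat 1)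
  have h2 : (fun n => reachCDF Q F K q p (n + 1) i x s)
      = fun n => ∑ j, p i j * reachCDF Q F K q p n j (F i x) (s - K i x) := by
    funext n; simp only [reachCDF]; rw [if_neg hx]
  rw [h2] at h1
  have h3 : Tendsto
      (fun n => ∑ j, p i j * reachCDF Q F K q p n j (F i x) (s - K i x)) atTop
      (nhds (∑ j, p i j * costCDF Q F K q p j (F i x) (s - K i x))) :=
    tendsto_finset_sum _ fun j _ =>
      (cost_tendsto Q F K q p hp0 hp1 j (F i x) (s - K i x)).const_mul _
  exact tendsto_nhds_unique h1 h3

lemma S_bddBelow (hK : ∀ i x, 0 < K i x) (hq : ∀ i, ∀ x ∈ Q, 0 ≤ q i x)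
    (i : Fin M) (x : X) :
    BddBelow {s : ℝ | 0 < costCDF Q F K q p i x s} := by
  refine ⟨0, fun s hs => ?_⟩
  by_contra h
  push_neg at h
  rw [Set.mem_setOf_eq, cost_neg Q F K q p hK hq i x s h] at hs
  exact lt_irrefl 0 hs

lemma S_nonempty
    (hAS : ∀ (i : Fin M) (x : X),
      Tendsto (fun s => costCDF Q F K q p i x s) atTop (nhds 1))
    (i : Fin M) (x : X) :
    {s : ℝ | 0 < costCDF Q F K q p i x s}.Nonempty := by
  have := ((hAS i x).eventually (eventually_gt_nhds (by norm_num : (0:ℝ) < 1))).exists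
  obtain ⟨s, hs⟩ := this
  exact ⟨s, hs⟩

lemma cost_eq_zero_of_lt (hK : ∀ i x, 0 < K i x) (hq : ∀ i, ∀ x ∈ Q, 0 ≤ q i x)
    (hp0 : ∀ i j, 0 ≤ p i j) (hp1 : ∀ i, ∑ j, p i j = 1)
    (i : Fin M) (x : X) (s : ℝ) (hs : s < minCost Q F K q p i x) :
    costCDF Q F K q p i x s = 0 := by
  by_contra h
  have hpos : 0 < costCDF Q F K q p i x s :=
    lt_of_le_of_ne (cost_nonneg Q F K q p hp0 hp1 i x s) (Ne.symm h)
  have := csInf_le (S_bddBelow Q F K q p hK hq i x) hpos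
  rw [minCost] at hs
  linarith

lemma minCost_inQ (i : Fin M) (x : X) (hx : x ∈ Q) :
    minCost Q F K q p i x = q i x := by
  have : {s : ℝ | 0 < costCDF Q F K q p i x s} = Set.Ici (q i x) := by
    ext s
    rw [Set.mem_setOf_eq, cost_inQ Q F K q p i x hx s]
    by_cases h : q i x ≤ s <;> simp [h]
  rw [minCost, this, csInf_Ici]

lemma exists_pos_route (hp0 : ∀ i j, 0 ≤ p i j) (hp1 : ∀ i, ∑ j, p i j = 1)
    (i : Fin M) : ∃ j, 0 < p i j := by
  by_contra h
  push_neg at h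
  have : ∑ j, p i j = 0 :=
    Finset.sum_eq_zero fun j _ => le_antisymm (h j) (hp0 i j)
  rw [hp1 i] at this
  norm_num at this

lemma minCost_rec (hK : ∀ i x, 0 < K i x) (hq : ∀ i, ∀ x ∈ Q, 0 ≤ q i x)
    (hp0 : ∀ i j, 0 ≤ p i j) (hp1 : ∀ i, ∑ j, p i j = 1)
    (hAS : ∀ (i : Fin M) (x : X),
      Tendsto (fun s => costCDF Q F K q p i x s) atTop (nhds 1))
    (i : Fin M) (x : X) (hx : x ∉ Q) :
    minCost Q F K q p i x
      = K i x + sInf {t : ℝ | ∃ j' : Fin M, 0 < p i j' ∧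
          t = minCost Q F K q p j' (F i x)} := by
  set y := F i x with hy
  set T := {t : ℝ | ∃ j' : Fin M, 0 < p i j' ∧ t = minCost Q F K q p j' y} with hT
  have hTfin : T.Finite := by
    have : T = (fun j => minCost Q F K q p j y) '' {j | 0 < p i j} := by
      ext t; simp [hT, Set.mem_image, eq_comm]
    rw [this]
    exact (Set.toFinite _).image _
  have hTne : T.Nonempty := by
    obtain ⟨j, hj⟩ := exists_pos_route p hp0 hp1 i
    exact ⟨minCost Q F K q p j y, j, hj, rfl⟩
  have hTbdd : BddBelow T := hTfin.bddBelow
  obtain ⟨j₀, hj₀, hj₀eq⟩ : ∃ j₀, 0 < p i j₀ ∧ sInf T = minCost Q F K q p j₀ y :=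
    hTne.csInf_mem hTfin
  apply le_antisymm
  · -- minCost i x ≤ K i x + sInf T
    rw [hj₀eq]
    have key : ∀ t ∈ {s : ℝ | 0 < costCDF Q F K q p j₀ y s},
        minCost Q F K q p i x - K i x ≤ t := by
      intro t ht
      have hmem : K i x + t ∈ {s : ℝ | 0 < costCDF Q F K q p i x s} := by
        rw [Set.mem_setOf_eq, cost_rec Q F K q p hp0 hp1 i x hx]
        have hsub : K i x + t - K i x = t := by ring
        rw [← hy, hsub]
        have hsingle : p i j₀ * costCDF Q F K q p j₀ y t
            ≤ ∑ j, p i j * costCDF Q F K q p j y t :=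
          Finset.single_le_sum
            (fun j _ => mul_nonneg (hp0 i j) (cost_nonneg Q F K q p hp0 hp1 j y t))
            (Finset.mem_univ j₀)
        have : 0 < p i j₀ * costCDF Q F K q p j₀ y t := mul_pos hj₀ ht
        linarith
      have := csInf_le (S_bddBelow Q F K q p hK hq i x) hmem
      rw [minCost]
      linarith
    have := le_csInf (S_nonempty Q F K q p hAS j₀ y) key
    simp only [minCost] at this ⊢
    linarith
  · -- K i x + sInf T ≤ minCost i x
    rw [minCost]
    apply le_csInf (S_nonempty Q F K q p hAS i x)
    intro s hs
    rw [Set.mem_setOf_eq, cost_rec Q F K q p hp0 hp1 i x hx, ← hy] at hs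
    have hex : ∃ j, 0 < p i j * costCDF Q F K q p j y (s - K i x) := by
      by_contra hc
      push_neg at hc
      have : ∑ j, p i j * costCDF Q F K q p j y (s - K i x) ≤ 0 :=
        Finset.sum_nonpos fun j _ => hc j
      linarith
    obtain ⟨j, hj⟩ := hex
    rcases mul_pos_iff.mp hj with ⟨hpj, hcj⟩ | ⟨hpj, _⟩
    · have h1 : minCost Q F K q p j y ≤ s - K i x :=
        csInf_le (S_bddBelow Q F K q p hK hq j y) hcj
      have h2 : sInf T ≤ minCost Q F K q p j y :=
        csInf_le hTbdd ⟨j, hpj, rfl⟩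
      linarith
    · exact absurd hpj (not_lt.mpr (hp0 i j))

end AuxLemmas

open Classical in
/-- **Recursion for the probability `w_i⁰(x)` of attaining the minimum
attainable cost:** off `Q`, `w_i⁰(x) = Σ_{j ∈ I(x)} p_{ij} w_j⁰(F_i(x))`,
where `I(x)` is the set of routes `j` with `p_{ij} > 0` minimizing
`s_j⁰(F_i(x))`; and `w_i⁰ = 1` on `Q`. -/
theorem minCostProb_recursion {X : Type*} [Fintype X] {M : ℕ} (Q : Set X)
    (F : Fin M → X → X) (K : Fin M → X → ℝ) (q : Fin M → X → ℝ)
    (p : Fin M → Fin M → ℝ)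
    (hK : ∀ i x, 0 < K i x) (hq : ∀ i, ∀ x ∈ Q, 0 ≤ q i x)
    (hp0 : ∀ i j, 0 ≤ p i j) (hp1 : ∀ i, ∑ j, p i j = 1)
    (hAS : ∀ (i : Fin M) (x : X),
      Filter.Tendsto (fun s => costCDF Q F K q p i x s) Filter.atTop (nhds 1))
    (w0 : Fin M → X → ℝ)
    (hw0 : ∀ i x, w0 i x = costCDF Q F K q p i x (minCost Q F K q p i x)) :
    (∀ i : Fin M, ∀ x ∉ Q,
        w0 i x = ∑ j : Fin M,
          if 0 < p i j ∧ minCost Q F K q p j (F i x)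
              = sInf {t : ℝ | ∃ j' : Fin M, 0 < p i j' ∧
                  t = minCost Q F K q p j' (F i x)}
          then p i j * w0 j (F i x) else 0) ∧
    (∀ i : Fin M, ∀ x ∈ Q, w0 i x = 1) := by
  constructor
  · intro i x hx
    have hrec := minCost_rec Q F K q p hK hq hp0 hp1 hAS i x hx
    set m := sInf {t : ℝ | ∃ j' : Fin M, 0 < p i j' ∧
        t = minCost Q F K q p j' (F i x)} with hm
    -- bddBelow of T for later use
    have hTfin : {t : ℝ | ∃ j' : Fin M, 0 < p i j' ∧
        t = minCost Q F K q p j' (F i x)}.Finite := by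
      have : {t : ℝ | ∃ j' : Fin M, 0 < p i j' ∧ t = minCost Q F K q p j' (F i x)}
          = (fun j => minCost Q F K q p j (F i x)) '' {j | 0 < p i j} := by
        ext t; simp [Set.mem_image, eq_comm]
      rw [this]
      exact (Set.toFinite _).image _
    have hTbdd := hTfin.bddBelow
    rw [hw0 i x, hrec, cost_rec Q F K q p hp0 hp1 i x hx]
    have hsub : K i x + m - K i x = m := by ring
    rw [hsub]
    apply Finset.sum_congr rfl
    intro j _
    by_cases hcond : 0 < p i j ∧ minCost Q F K q p j (F i x) = m
    · rw [if_pos hcond, hw0 j (F i x), hcond.2]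
    · rw [if_neg hcond]
      push_neg at hcond
      by_cases hpj : 0 < p i j
      · have hne := hcond hpj
        have hle : m ≤ minCost Q F K q p j (F i x) :=
          csInf_le hTbdd ⟨j, hpj, rfl⟩
        have hlt : m < minCost Q F K q p j (F i x) := lt_of_le_of_ne hle (Ne.symm hne)
        rw [cost_eq_zero_of_lt Q F K q p hK hq hp0 hp1 j (F i x) m hlt, mul_zero]
      · have hz : p i j = 0 := le_antisymm (not_lt.mp hpj) (hp0 i j)
        rw [hz, zero_mul]
  · intro i x hx
    rw [hw0 i x, minCost_inQ Q F K q p i x hx, cost_inQ Q F K q p i x hx,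
      if_pos le_rfl]
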